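/- In the ring R = ℂ[u,e]/⟨e·u^{m-k}, u^m, (-d·u + (k-1)·e)·e⟩ with m > k ≥ 2 and d ≥ 1 integers, the kernel of multiplication by e on R is, as an ideal, equal to ⟨-d·u + (k-1)·e, u^{m-k}⟩, and as a ℂ-vector space it equals (-d·u + (k-1)·e)·R ⊕ ℂ·u^{m-k}. -/

import Mathlib

open MvPolynomial

/-- The ideal `⟨e·u^(m-k), u^m, (-d·u + (k-1)·e)·e⟩` in `ℂ[u,e]`, with `u = X 0`, `e = X 1`. -/
noncomputable def SRIdeal (m k d : ℕ) : Ideal (MvPolynomial (Fin 2) ℂ) :=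
  Ideal.span {X 1 * X 0 ^ (m - k), X 0 ^ m,
    (C (-(d : ℂ)) * X 0 + C ((k : ℂ) - 1) * X 1) * X 1}

namespace Stmt8Aux

/-- Substituting `u ↦ t`, `e ↦ c·t`. -/
noncomputable def phi (c : ℂ) : MvPolynomial (Fin 2) ℂ →ₐ[ℂ] Polynomial ℂ :=
  MvPolynomial.aeval ![Polynomial.X, Polynomial.C c * Polynomial.X]

/-- The section `t ↦ u`. -/
noncomputable def sec : Polynomial ℂ →ₐ[ℂ] MvPolynomial (Fin 2) ℂ :=
  Polynomial.aeval (X 0)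

@[simp] lemma phi_X0 (c : ℂ) : phi c (X 0) = Polynomial.X := by
  simp [phi]

@[simp] lemma phi_X1 (c : ℂ) : phi c (X 1) = Polynomial.C c * Polynomial.X := by
  simp [phi]

@[simp] lemma sec_X : sec Polynomial.X = (X 0 : MvPolynomial (Fin 2) ℂ) := by
  simp [sec]

lemma sub_sec_phi (c : ℂ) (p : MvPolynomial (Fin 2) ℂ) :
    p - sec (phi c p) ∈ Ideal.span {(X 1 : MvPolynomial (Fin 2) ℂ) - C c * X 0} := by
  induction p using MvPolynomial.induction_on with
  | C a => simp [phi, sec]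
  | add p r hp hr =>
      have := Ideal.add_mem _ hp hr
      convert this using 1
      rw [map_add, map_add]; ring
  | mul_X p n hp =>
      rw [map_mul, map_mul]
      have key : (X n : MvPolynomial (Fin 2) ℂ) - sec (phi c (X n)) ∈
          Ideal.span {(X 1 : MvPolynomial (Fin 2) ℂ) - C c * X 0} := by
        fin_cases n
        · show (X 0 : MvPolynomial (Fin 2) ℂ) - sec (phi c (X 0)) ∈ _
          simp [sec]
        · show (X 1 : MvPolynomial (Fin 2) ℂ) - sec (phi c (X 1)) ∈ _
          have : sec (phi c (X 1)) = C c * X 0 := by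
            rw [phi_X1, map_mul, sec_X]
            simp [sec]
          rw [this]
          exact Ideal.subset_span rfl
      have : p * X n - sec (phi c p) * sec (phi c (X n)) =
          (p - sec (phi c p)) * X n + sec (phi c p) * (X n - sec (phi c (X n))) := by ring
      rw [this]
      exact Ideal.add_mem _ (Ideal.mul_mem_right _ _ hp) (Ideal.mul_mem_left _ _ key)

lemma mem_ker_phi (c : ℂ) (p : MvPolynomial (Fin 2) ℂ) (h : phi c p = 0) :
    p ∈ Ideal.span {(X 1 : MvPolynomial (Fin 2) ℂ) - C c * X 0} := by
  have := sub_sec_phi c p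
  rwa [h, map_zero, sub_zero] at this

end Stmt8Aux

set_option maxHeartbeats 2000000 in
/-- In `R = ℂ[u,e]/⟨e·u^(m-k), u^m, (-d·u + (k-1)·e)·e⟩` with `m > k ≥ 2` and `d ≥ 1`,
the kernel of multiplication by `e` is the ideal `⟨-d·u + (k-1)·e, u^(m-k)⟩`, and as a
`ℂ`-vector space it is the (internal) direct sum of the ideal `(-d·u + (k-1)·e)·R` and the
line `ℂ·u^(m-k)`. -/
theorem stmt8 (m k d : ℕ) (hk : 2 ≤ k) (hkm : k < m) (hd : 1 ≤ d) :
    let q := Ideal.Quotient.mk (SRIdeal m k d)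
    let f : MvPolynomial (Fin 2) ℂ := C (-(d : ℂ)) * X 0 + C ((k : ℂ) - 1) * X 1
    (∀ x, q (X 1) * x = 0 ↔ x ∈ Ideal.span {q f, q (X 0 ^ (m - k))}) ∧
    LinearMap.ker (LinearMap.mulLeft ℂ (q (X 1))) =
      (Ideal.span {q f}).restrictScalars ℂ ⊔ (ℂ ∙ q (X 0 ^ (m - k))) ∧
    Disjoint ((Ideal.span {q f}).restrictScalars ℂ) (ℂ ∙ q (X 0 ^ (m - k))) := by
  intro q f
  have hq : q = Ideal.Quotient.mk (SRIdeal m k d) := rfl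
  have hf : f = C (-(d : ℂ)) * X 0 + C ((k : ℂ) - 1) * X 1 := rfl
  set c : ℂ := (d : ℂ) / ((k : ℂ) - 1) with hc
  have hk1 : ((k : ℂ) - 1) ≠ 0 := by
    have : (k : ℂ) ≠ 1 := by exact_mod_cast (by omega : k ≠ 1)
    exact sub_ne_zero.mpr this
  have hd0 : ((d : ℂ)) ≠ 0 := Nat.cast_ne_zero.mpr (by omega)
  have hc0 : c ≠ 0 := div_ne_zero hd0 hk1
  have hcd : ((k : ℂ) - 1) * c = d := by rw [hc, mul_div_assoc', mul_div_cancel_left₀ _ hk1]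
  have hfactor : f = C ((k : ℂ) - 1) * (X 1 - C c * X 0) := by
    have hC : (C ((k : ℂ) - 1) * C c : MvPolynomial (Fin 2) ℂ) = C (d : ℂ) := by
      rw [← C_mul, hcd]
    rw [hf]
    simp only [map_neg]
    linear_combination (X 0 : MvPolynomial (Fin 2) ℂ) * hC
  have hgen : (X 1 : MvPolynomial (Fin 2) ℂ) - C c * X 0 = C (((k : ℂ) - 1)⁻¹) * f := by
    rw [hfactor, ← mul_assoc, ← C_mul, inv_mul_cancel₀ hk1, C_1, one_mul]
  have hspan : Ideal.span {(X 1 : MvPolynomial (Fin 2) ℂ) - C c * X 0} = Ideal.span {f} := by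
    apply le_antisymm
    · rw [Ideal.span_le, Set.singleton_subset_iff, hgen]
      exact Ideal.mul_mem_left _ _ (Ideal.subset_span rfl)
    · rw [Ideal.span_le, Set.singleton_subset_iff, hfactor]
      exact Ideal.mul_mem_left _ _ (Ideal.subset_span rfl)
  have hphif : Stmt8Aux.phi c f = 0 := by
    rw [hfactor]
    simp [Stmt8Aux.phi]
  have hgen1 : q (X 1 * X 0 ^ (m - k)) = 0 :=
    Ideal.Quotient.eq_zero_iff_mem.mpr (Ideal.subset_span (by simp))
  have hgen3 : q (f * X 1) = 0 :=
    Ideal.Quotient.eq_zero_iff_mem.mpr (Ideal.subset_span (by simp [hf]))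
  have hsmul : ∀ (a : ℂ) (x : MvPolynomial (Fin 2) ℂ), a • q x = q (C a * x) := by
    intro a x
    have : a • q x = q (a • x) := rfl
    rw [this, MvPolynomial.smul_eq_C_mul]
  -- kernel lemma at the polynomial level
  have hker : ∀ p : MvPolynomial (Fin 2) ℂ, X 1 * p ∈ SRIdeal m k d →
      p ∈ Ideal.span {f, X 0 ^ (m - k)} := by
    intro p hp
    rw [SRIdeal, Ideal.mem_span_insert] at hp
    obtain ⟨A, z, hz, hEq⟩ := hp
    rw [Ideal.mem_span_insert] at hz
    obtain ⟨B, w, hw, hzEq⟩ := hz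
    rw [Ideal.mem_span_singleton] at hw
    obtain ⟨E, hwEq⟩ := hw
    rw [hzEq, hwEq, ← hf] at hEq
    have happ := congrArg (Stmt8Aux.phi c) hEq
    simp only [map_add, map_mul, map_pow, Stmt8Aux.phi_X0, Stmt8Aux.phi_X1, hphif,
      zero_mul, mul_zero, add_zero] at happ
    have hdvd : Polynomial.X ^ (m - k) ∣ Stmt8Aux.phi c p := by
      rw [Polynomial.X_pow_dvd_iff]
      intro j hj
      have hd2 : Polynomial.X ^ (m - k + 1) ∣
          (Stmt8Aux.phi c A * (Polynomial.C c * Polynomial.X * Polynomial.X ^ (m - k)) +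
            Stmt8Aux.phi c B * Polynomial.X ^ m) := by
        apply dvd_add
        · exact ⟨Stmt8Aux.phi c A * Polynomial.C c, by ring⟩
        · have hXm : (Polynomial.X : Polynomial ℂ) ^ m =
              Polynomial.X ^ (m - k + 1) * Polynomial.X ^ (k - 1) := by
            rw [← pow_add]
            congr 1
            omega
          exact ⟨Polynomial.X ^ (k - 1) * Stmt8Aux.phi c B, by rw [hXm]; ring⟩
      have h2 : (Polynomial.C c * Polynomial.X * Stmt8Aux.phi c p).coeff (j + 1) = 0 := by
        rw [happ]
        exact Polynomial.X_pow_dvd_iff.mp hd2 (j + 1) (by omega)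
      rw [mul_assoc, Polynomial.coeff_C_mul, Polynomial.coeff_X_mul] at h2
      exact (mul_eq_zero.mp h2).resolve_left hc0
    obtain ⟨g, hg⟩ := hdvd
    have hmem := Stmt8Aux.sub_sec_phi c p
    rw [hspan] at hmem
    have hdecomp : p = (p - Stmt8Aux.sec (Stmt8Aux.phi c p)) +
        X 0 ^ (m - k) * Stmt8Aux.sec g := by
      rw [hg, map_mul, map_pow, Stmt8Aux.sec_X]; ring
    rw [hdecomp]
    refine Ideal.add_mem _ (Ideal.span_mono ?_ hmem)
      (Ideal.mul_mem_right _ _ (Ideal.subset_span (by simp)))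
    simp
  -- part 1
  have part1 : ∀ x, q (X 1) * x = 0 ↔ x ∈ Ideal.span {q f, q (X 0 ^ (m - k))} := by
    intro x
    obtain ⟨p, rfl⟩ := Ideal.Quotient.mk_surjective x
    constructor
    · intro h
      rw [← map_mul, hq, Ideal.Quotient.eq_zero_iff_mem] at h
      have h2 := Ideal.mem_map_of_mem q (hker p h)
      rwa [Ideal.map_span, Set.image_insert_eq, Set.image_singleton] at h2
    · intro h
      rw [Ideal.mem_span_pair] at h
      obtain ⟨a, b, hab⟩ := h
      have e1 : q (X 1) * q f = 0 := by rw [← map_mul, mul_comm (X 1) f]; exact hgen3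
      have e2 : q (X 1) * q (X 0 ^ (m - k)) = 0 := by rw [← map_mul]; exact hgen1
      rw [← hab]
      linear_combination a * e1 + b * e2
  -- ℂ-span absorption
  have hXn : ∀ nn : Fin 2,
      q (X nn) * q (X 0 ^ (m - k)) ∈ (Ideal.span {q f}).restrictScalars ℂ := by
    intro nn
    fin_cases nn
    · show q (X 0) * q (X 0 ^ (m - k)) ∈ _
      have key : q f * q (X 0 ^ (m - k)) = (-(d : ℂ)) • q (X 0 * X 0 ^ (m - k)) := by
        rw [← map_mul, hsmul, hq]
        apply Ideal.Quotient.eq.mpr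
        have : f * X 0 ^ (m - k) - C (-(d : ℂ)) * (X 0 * X 0 ^ (m - k)) =
            C ((k : ℂ) - 1) * (X 1 * X 0 ^ (m - k)) := by
          rw [hf]; ring
        rw [this]
        exact Ideal.mul_mem_left _ _ (Ideal.subset_span (by simp))
      have key2 : q (X 0) * q (X 0 ^ (m - k)) =
          (-(d : ℂ))⁻¹ • (q f * q (X 0 ^ (m - k))) := by
        rw [key, ← map_mul, smul_smul, inv_mul_cancel₀ (neg_ne_zero.mpr hd0), one_smul]
      rw [key2]
      exact Submodule.smul_mem _ _ (by
        rw [Submodule.restrictScalars_mem]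
        exact Ideal.mul_mem_right _ _ (Ideal.subset_span rfl))
    · show q (X 1) * q (X 0 ^ (m - k)) ∈ _
      rw [← map_mul, hgen1]
      exact zero_mem _
  have habs : ∀ r : MvPolynomial (Fin 2) ℂ, q (r * X 0 ^ (m - k)) ∈
      (Ideal.span {q f}).restrictScalars ℂ ⊔ (ℂ ∙ q (X 0 ^ (m - k))) := by
    intro r
    induction r using MvPolynomial.induction_on with
    | C a =>
        rw [← hsmul]
        exact Submodule.mem_sup_right
          (Submodule.smul_mem _ a (Submodule.mem_span_singleton_self _))
    | add p r hp hr =>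
        rw [add_mul, map_add]
        exact add_mem hp hr
    | mul_X p nn hp =>
        rw [show p * X nn * X 0 ^ (m - k) = X nn * (p * X 0 ^ (m - k)) from by ring, map_mul]
        obtain ⟨y, hy, z, hz, hyz⟩ := Submodule.mem_sup.mp hp
        obtain ⟨a, ha⟩ := Submodule.mem_span_singleton.mp hz
        rw [← hyz, ← ha, mul_add]
        apply add_mem
        · apply Submodule.mem_sup_left
          rw [Submodule.restrictScalars_mem] at hy ⊢
          exact Ideal.mul_mem_left _ _ hy
        · rw [mul_smul_comm]
          exact Submodule.smul_mem _ a (Submodule.mem_sup_left (hXn nn))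
  -- part 2
  have part2 : LinearMap.ker (LinearMap.mulLeft ℂ (q (X 1))) =
      (Ideal.span {q f}).restrictScalars ℂ ⊔ (ℂ ∙ q (X 0 ^ (m - k))) := by
    apply le_antisymm
    · intro x hx
      rw [LinearMap.mem_ker, LinearMap.mulLeft_apply] at hx
      rw [part1 x, Ideal.mem_span_pair] at hx
      obtain ⟨a, b, hab⟩ := hx
      rw [← hab]
      apply add_mem
      · apply Submodule.mem_sup_left
        rw [Submodule.restrictScalars_mem]
        exact Ideal.mul_mem_left _ _ (Ideal.subset_span rfl)
      · obtain ⟨r, rfl⟩ := Ideal.Quotient.mk_surjective b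
        rw [← map_mul]
        exact habs r
    · apply sup_le
      · intro y hy
        rw [Submodule.restrictScalars_mem, Ideal.mem_span_singleton'] at hy
        obtain ⟨b, rfl⟩ := hy
        rw [LinearMap.mem_ker, LinearMap.mulLeft_apply]
        have e1 : q (X 1) * q f = 0 := by rw [← map_mul, mul_comm (X 1) f]; exact hgen3
        linear_combination b * e1
      · intro y hy
        obtain ⟨a, ha⟩ := Submodule.mem_span_singleton.mp hy
        rw [LinearMap.mem_ker, LinearMap.mulLeft_apply, ← ha, mul_smul_comm,
          ← map_mul, hgen1, smul_zero]
  -- part 3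
  have part3 : Disjoint ((Ideal.span {q f}).restrictScalars ℂ) (ℂ ∙ q (X 0 ^ (m - k))) := by
    rw [Submodule.disjoint_def]
    intro x hx hx'
    rw [Submodule.restrictScalars_mem, Ideal.mem_span_singleton'] at hx
    obtain ⟨b, hb⟩ := hx
    obtain ⟨a, ha⟩ := Submodule.mem_span_singleton.mp hx'
    obtain ⟨r, rfl⟩ := Ideal.Quotient.mk_surjective b
    have hq1 : q (r * f) = q (C a * X 0 ^ (m - k)) := by
      rw [map_mul]
      rw [hb, ← ha, hsmul]
    have hmem : r * f - C a * X 0 ^ (m - k) ∈ SRIdeal m k d := by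
      exact Ideal.Quotient.eq.mp hq1
    have ha0 : a = 0 := by
      rw [SRIdeal, Ideal.mem_span_insert] at hmem
      obtain ⟨A, z, hz, hEq⟩ := hmem
      rw [Ideal.mem_span_insert] at hz
      obtain ⟨B, w, hw, hzEq⟩ := hz
      rw [Ideal.mem_span_singleton] at hw
      obtain ⟨E, hwEq⟩ := hw
      rw [hzEq, hwEq, ← hf] at hEq
      have happ := congrArg (Stmt8Aux.phi c) hEq
      simp only [map_sub, map_add, map_mul, map_pow, Stmt8Aux.phi_X0, Stmt8Aux.phi_X1, hphif,
        zero_mul, mul_zero, add_zero, zero_sub] at happ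
      have hco := congrArg (fun p : Polynomial ℂ => p.coeff (m - k)) happ
      have hd2 : Polynomial.X ^ (m - k + 1) ∣
          (Stmt8Aux.phi c A * (Polynomial.C c * Polynomial.X * Polynomial.X ^ (m - k)) +
            Stmt8Aux.phi c B * Polynomial.X ^ m) := by
        apply dvd_add
        · exact ⟨Stmt8Aux.phi c A * Polynomial.C c, by ring⟩
        · have hXm : (Polynomial.X : Polynomial ℂ) ^ m =
              Polynomial.X ^ (m - k + 1) * Polynomial.X ^ (k - 1) := by
            rw [← pow_add]
            congr 1
            omega
          exact ⟨Polynomial.X ^ (k - 1) * Stmt8Aux.phi c B, by rw [hXm]; ring⟩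
      rw [Polynomial.X_pow_dvd_iff.mp hd2 (m - k) (by omega)] at hco
      have : Stmt8Aux.phi c (C a) = Polynomial.C a := by
        simp [Stmt8Aux.phi]
      rw [this] at hco
      simpa using hco
    rw [← ha, ha0, zero_smul]
  exact ⟨part1, part2, part3⟩
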